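/- Bendixson's theorem (imaginary part, special case): Let X be a real symmetric n×n matrix and Y a real skew-symmetric n×n matrix. Then for every complex eigenvalue λ of X + Y, |Im(λ)| ≤ ρ(Y), the spectral radius of Y. -/

import Mathlib

open Matrix

/-- The spectral radius of a complex square matrix: supremum of the norms of its
eigenvalues. -/
noncomputable def specRad {n : ℕ} (M : Matrix (Fin n) (Fin n) ℂ) : ℝ :=
  sSup {r : ℝ | ∃ μ : ℂ, r = ‖μ‖ ∧ ∃ v : Fin n → ℂ, v ≠ 0 ∧ M.mulVec v = μ • v}

/-- Bendixson (imaginary part): for `X` symmetric and `Y` skew-symmetric real matrices,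
the imaginary part of every complex eigenvalue of `X + Y` is bounded in absolute value by
the spectral radius of `Y`. -/
theorem stmt4 {n : ℕ} (X Y : Matrix (Fin n) (Fin n) ℝ)
    (hX : X.IsSymm) (hY : Yᵀ = -Y)
    (μ : ℂ) (v : Fin n → ℂ) (hv : v ≠ 0)
    (h : ((X + Y).map Complex.ofReal).mulVec v = μ • v) :
    |μ.im| ≤ specRad (Y.map Complex.ofReal) := by
  classical
  set Xc := X.map Complex.ofReal with hXc
  set Yc := Y.map Complex.ofReal with hYc
  set r := specRad Yc with hr
  -- the eigenvalue set is bounded above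
  have hbdd : BddAbove {s : ℝ | ∃ μ' : ℂ, s = ‖μ'‖ ∧ ∃ w : Fin n → ℂ, w ≠ 0 ∧ Yc.mulVec w = μ' • w} := by
    refine ⟨‖(Matrix.toEuclideanLin Yc).toContinuousLinearMap‖, ?_⟩
    rintro s ⟨μ', rfl, w, hw, hmw⟩
    set f := (Matrix.toEuclideanLin Yc).toContinuousLinearMap with hf
    set W : EuclideanSpace ℂ (Fin n) := (WithLp.equiv 2 (Fin n → ℂ)).symm w with hW
    have hW0 : W ≠ 0 := by
      intro h0
      apply hw
      simpa [hW, WithLp.equiv_symm_apply] using h0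
    have hfW : f W = μ' • W := by
      show Matrix.toEuclideanLin Yc W = μ' • W
      rw [hW, WithLp.equiv_symm_apply, toEuclideanLin_apply_piLp_toLp, hmw]
      simp [WithLp.toLp_smul]
    have := f.le_opNorm W
    rw [hfW, norm_smul] at this
    have hWpos : 0 < ‖W‖ := norm_pos_iff.mpr hW0
    exact le_of_mul_le_mul_right this hWpos
  -- Hermitian matrix H = I • Yc
  have hYcH : Ycᴴ = -Yc := by
    ext i j
    simp only [conjTranspose_apply, Matrix.map_apply, Matrix.neg_apply, hYc]
    have : Yᵀ i j = -Y i j := by rw [hY]; simp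
    rw [Matrix.transpose_apply] at this
    simp [this]
  have hH : (Complex.I • Yc).IsHermitian := by
    unfold Matrix.IsHermitian
    rw [conjTranspose_smul, hYcH]
    simp [Complex.star_def]
  set H := Complex.I • Yc with hHdef
  have hYc_eq : Yc = (-Complex.I) • H := by
    rw [hHdef, smul_smul]; simp
  -- every eigenvalue of H is bounded by r
  have heig : ∀ j, |hH.eigenvalues j| ≤ r := by
    intro j
    apply le_csSup hbdd
    refine ⟨(-Complex.I) * (hH.eigenvalues j : ℂ), ?_, ⇑(hH.eigenvectorBasis j), ?_, ?_⟩
    · simp [norm_mul, abs_of_nonneg]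
    · intro h0
      apply hH.eigenvectorBasis.orthonormal.ne_zero j
      ext i
      exact congrFun h0 i
    · rw [hYc_eq, smul_mulVec, hH.mulVec_eigenvectorBasis]
      ext i
      simp [Pi.smul_apply, Complex.real_smul]
      ring
  -- unitary diagonalization
  set U : Matrix (Fin n) (Fin n) ℂ := (hH.eigenvectorUnitary : Matrix (Fin n) (Fin n) ℂ) with hU
  have hUU : U * star U = 1 := (Matrix.mem_unitaryGroup_iff).mp (hH.eigenvectorUnitary).2
  set u : Fin n → ℂ := (star U) *ᵥ v with hu
  have hvU : U *ᵥ u = v := by rw [hu, mulVec_mulVec, hUU, one_mulVec]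
  have hdiag : star U * H * U = diagonal (Complex.ofReal ∘ hH.eigenvalues) :=
    by have := hH.conjStarAlgAut_star_eigenvectorUnitary
       rw [Unitary.conjStarAlgAut_star_apply] at this
       exact this
  set t : ℝ := ∑ i, Complex.normSq (v i) with ht
  have hvt : star v ⬝ᵥ v = (t : ℂ) := by
    simp only [dotProduct, Pi.star_apply, ht]
    push_cast
    congr 1
    ext i
    rw [Complex.star_def, ← Complex.normSq_eq_conj_mul_self]
  have htpos : 0 < t := by
    obtain ⟨i, hi⟩ : ∃ i, v i ≠ 0 := by
      by_contra hc
      push_neg at hc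
      exact hv (funext hc)
    exact Finset.sum_pos' (fun j _ => Complex.normSq_nonneg _)
      ⟨i, Finset.mem_univ i, Complex.normSq_pos.mpr hi⟩
  -- u has the same norm
  have hstaru : star u = star v ᵥ* U := by
    rw [hu, star_mulVec, star_eq_conjTranspose, conjTranspose_conjTranspose]
  have hut : star u ⬝ᵥ u = (t : ℂ) := by
    rw [hstaru, hu, ← dotProduct_mulVec, mulVec_mulVec, hUU, one_mulVec, hvt]
  have hut' : ∑ j, Complex.normSq (u j) = t := by
    have : star u ⬝ᵥ u = ((∑ j, Complex.normSq (u j) : ℝ) : ℂ) := by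
      simp only [dotProduct, Pi.star_apply]
      push_cast
      congr 1
      ext i
      rw [Complex.star_def, ← Complex.normSq_eq_conj_mul_self]
    rw [hut] at this
    exact_mod_cast this.symm
  -- the H-quadratic form
  set s : ℝ := ∑ j, hH.eigenvalues j * Complex.normSq (u j) with hs
  have hz : star v ⬝ᵥ (H *ᵥ v) = (s : ℂ) := by
    have h1 : star v ⬝ᵥ (H *ᵥ v) = star u ⬝ᵥ (diagonal (Complex.ofReal ∘ hH.eigenvalues) *ᵥ u) := by
      rw [← hdiag, ← hvU, star_mulVec, ← mulVec_mulVec, dotProduct_mulVec, vecMul_vecMul,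
        star_eq_conjTranspose, ← dotProduct_mulVec, mulVec_mulVec]
    rw [h1]
    simp only [dotProduct, mulVec_diagonal, Pi.star_apply, hs, Function.comp_apply]
    push_cast
    congr 1
    ext j
    rw [Complex.star_def, Complex.normSq_eq_conj_mul_self]
    ring
  -- eigen equation quadratic form
  have hA : (X + Y).map Complex.ofReal = Xc + Yc := by
    ext i j
    simp [Matrix.map_apply, Matrix.add_apply, hXc, hYc]
  have hmain : star v ⬝ᵥ (Xc *ᵥ v) + star v ⬝ᵥ (Yc *ᵥ v) = μ * t := by
    have h2 := congrArg (fun w => star v ⬝ᵥ w) h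
    simp only [hA, add_mulVec, dotProduct_add, dotProduct_smul, hvt, smul_eq_mul] at h2
    exact h2
  -- X-part is real
  have hXcH : Xcᴴ = Xc := by
    ext i j
    have hXs : Xᵀ i j = X i j := by rw [hX]
    rw [Matrix.transpose_apply] at hXs
    simp [conjTranspose_apply, Matrix.map_apply, hXc, hXs]
  have hp : (star v ⬝ᵥ (Xc *ᵥ v)).im = 0 := by
    have hconj : star (star v ⬝ᵥ (Xc *ᵥ v)) = star v ⬝ᵥ (Xc *ᵥ v) := by
      rw [← star_dotProduct, star_mulVec, hXcH, ← dotProduct_mulVec]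
    rw [Complex.star_def, Complex.conj_eq_iff_im] at hconj
    exact hconj
  -- Y-part
  have hq : star v ⬝ᵥ (Yc *ᵥ v) = -Complex.I * (s : ℂ) := by
    rw [hYc_eq, smul_mulVec, dotProduct_smul, hz, smul_eq_mul]
  have him : μ.im * t = -s := by
    have h3 := congrArg Complex.im hmain
    rw [hq] at h3
    simp only [Complex.add_im, hp, Complex.mul_im, Complex.neg_re, Complex.I_re,
      Complex.ofReal_im, Complex.neg_im, Complex.I_im, Complex.ofReal_re] at h3
    linarith
  have hsb : |s| ≤ r * t := by
    rw [hs, ← hut', Finset.mul_sum]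
    calc |∑ j, hH.eigenvalues j * Complex.normSq (u j)|
        ≤ ∑ j, |hH.eigenvalues j * Complex.normSq (u j)| :=
          Finset.abs_sum_le_sum_abs _ _
      _ ≤ ∑ j, r * Complex.normSq (u j) := by
          refine Finset.sum_le_sum fun j _ => ?_
          rw [abs_mul, abs_of_nonneg (Complex.normSq_nonneg _)]
          exact mul_le_mul_of_nonneg_right (heig j) (Complex.normSq_nonneg _)
  have hfin : |μ.im| * t ≤ r * t := by
    calc |μ.im| * t = |μ.im * t| := by
          rw [abs_mul, abs_of_pos htpos]
      _ = |s| := by rw [him, abs_neg]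
      _ ≤ r * t := hsb
  exact le_of_mul_le_mul_right hfin htpos
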